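/- Let ξ₀, ξ₁, …, ξₙ span a fan. If k and l are indices with 0 ≤ k, k+1 < l ≤ n and det(ξ_k, ξ_l) = 1 (i.e. ξ_k and ξ_l form a base of the lattice ℤ²), then there exists an index i with k < i < l such that ξ_i = ξ_k + ξ_l. -/
import Mathlib


/-- det(ξ,ν) = ξ₁ν₂ − ξ₂ν₁ for ξ, ν ∈ ℤ². -/
def det2 (ξ ν : ℤ × ℤ) : ℤ := ξ.1 * ν.2 - ξ.2 * ν.1

/-- A sequence ξ₀, …, ξₙ of vectors in ℤ² with nonnegative coordinates spans a fan if
ξ₀ = (1,0), ξₙ = (0,1) and det(ξ_{i−1}, ξ_i) = 1 for all 1 ≤ i ≤ n. -/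
def SpansFan (n : ℕ) (ξ : ℕ → ℤ × ℤ) : Prop :=
  (∀ i ≤ n, 0 ≤ (ξ i).1 ∧ 0 ≤ (ξ i).2) ∧
  ξ 0 = (1, 0) ∧ ξ n = (0, 1) ∧
  ∀ i, 1 ≤ i → i ≤ n → det2 (ξ (i - 1)) (ξ i) = 1

/-- Plücker relation for 2×2 determinants. -/
lemma det2_pluck (x y p q : ℤ × ℤ) :
    det2 x q * det2 p y - det2 p x * det2 y q = det2 x y * det2 p q := by
  simp only [det2]; ring

lemma det2_self (v : ℤ × ℤ) : det2 v v = 0 := by simp only [det2]; ring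

/-- Downward step: if det(u,v)=1 and det(v,w)≥1, with u,v,w nonneg, then det(u,w)≥1. -/
lemma stepA (u v w : ℤ × ℤ) (hu1 : 0 ≤ u.1) (hu2 : 0 ≤ u.2)
    (hv1 : 0 ≤ v.1) (hv2 : 0 ≤ v.2) (hw1 : 0 ≤ w.1) (hw2 : 0 ≤ w.2)
    (huv : det2 u v = 1) (hvw : 1 ≤ det2 v w) : 1 ≤ det2 u w := by
  by_contra h
  push_neg at h
  have hA : det2 u w ≤ 0 := by omega
  have e1 : w.1 = det2 u w * v.1 - det2 v w * u.1 := by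
    simp only [det2] at huv ⊢; linear_combination (-w.1) * huv
  have e2 : w.2 = det2 u w * v.2 - det2 v w * u.2 := by
    simp only [det2] at huv ⊢; linear_combination (-w.2) * huv
  have h1 : w.1 = 0 := by nlinarith [mul_nonpos_of_nonpos_of_nonneg hA hv1, mul_nonneg (by linarith : (0:ℤ) ≤ det2 v w) hu1]
  have h2 : w.2 = 0 := by nlinarith [mul_nonpos_of_nonpos_of_nonneg hA hv2, mul_nonneg (by linarith : (0:ℤ) ≤ det2 v w) hu2]
  have : det2 v w = 0 := by simp only [det2, h1, h2]; ring
  omega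

/-- Upward step: if det(u,v)≥1 and det(v,w)=1, with u,v,w nonneg, then det(u,w)≥1. -/
lemma stepB (u v w : ℤ × ℤ) (hu1 : 0 ≤ u.1) (hu2 : 0 ≤ u.2)
    (hv1 : 0 ≤ v.1) (hv2 : 0 ≤ v.2) (hw1 : 0 ≤ w.1) (hw2 : 0 ≤ w.2)
    (huv : 1 ≤ det2 u v) (hvw : det2 v w = 1) : 1 ≤ det2 u w := by
  by_contra h
  push_neg at h
  have hC : det2 u w ≤ 0 := by omega
  have e1 : u.1 = det2 u w * v.1 - det2 u v * w.1 := by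
    simp only [det2] at hvw ⊢; linear_combination (-u.1) * hvw
  have e2 : u.2 = det2 u w * v.2 - det2 u v * w.2 := by
    simp only [det2] at hvw ⊢; linear_combination (-u.2) * hvw
  have h1 : u.1 = 0 := by nlinarith [mul_nonpos_of_nonpos_of_nonneg hC hv1, mul_nonneg (by linarith : (0:ℤ) ≤ det2 u v) hw1]
  have h2 : u.2 = 0 := by nlinarith [mul_nonpos_of_nonpos_of_nonneg hC hv2, mul_nonneg (by linarith : (0:ℤ) ≤ det2 u v) hw2]
  have : det2 u v = 0 := by simp only [det2, h1, h2]; ring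
  omega

/-- If det(p,q)=det(p,x)=det(x,q)=1 then x = p + q. -/
lemma eq_add_of_det (p q x : ℤ × ℤ) (hpq : det2 p q = 1) (hpx : det2 p x = 1)
    (hxq : det2 x q = 1) : x = p + q := by
  have e1 : x.1 = p.1 + q.1 := by
    simp only [det2] at hpq hpx hxq
    linear_combination q.1 * hpx + p.1 * hxq - x.1 * hpq
  have e2 : x.2 = p.2 + q.2 := by
    simp only [det2] at hpq hpx hxq
    linear_combination q.2 * hpx + p.2 * hxq - x.2 * hpq
  exact Prod.ext e1 e2

/-- If ξ₀, …, ξₙ span a fan, k + 1 < l ≤ n and det(ξ_k, ξ_l) = 1, then some ξ_i with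
k < i < l equals ξ_k + ξ_l. -/
theorem fan_sum_of_det_one (n : ℕ) (ξ : ℕ → ℤ × ℤ) (hfan : SpansFan n ξ)
    (k l : ℕ) (hkl : k + 1 < l) (hln : l ≤ n) (hdet : det2 (ξ k) (ξ l) = 1) :
    ∃ i, k < i ∧ i < l ∧ ξ i = ξ k + ξ l := by
  classical
  obtain ⟨hnn, h0, hn, hcons⟩ := hfan
  -- a_i := det2 (ξ i) (ξ l), positivity for i < l
  have hA : ∀ d, ∀ i, i + 1 + d = l → 1 ≤ det2 (ξ i) (ξ l) := by
    intro d
    induction d with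
    | zero =>
      intro i hi
      have h := hcons l (by omega) hln
      rw [show l - 1 = i from by omega] at h
      exact h.ge
    | succ d ih =>
      intro i hi
      have h := hcons (i + 1) (by omega) (by omega)
      simp only [Nat.add_sub_cancel] at h
      exact stepA (ξ i) (ξ (i + 1)) (ξ l)
        (hnn i (by omega)).1 (hnn i (by omega)).2
        (hnn (i + 1) (by omega)).1 (hnn (i + 1) (by omega)).2
        (hnn l hln).1 (hnn l hln).2 h (ih (i + 1) (by omega))
  -- b_i := det2 (ξ k) (ξ i), positivity for k < i ≤ l
  have hB : ∀ d, k + 1 + d ≤ l → 1 ≤ det2 (ξ k) (ξ (k + 1 + d)) := by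
    intro d
    induction d with
    | zero =>
      intro _
      have h := hcons (k + 1) (by omega) (by omega)
      simp only [Nat.add_sub_cancel] at h
      exact h.ge
    | succ d ih =>
      intro hd
      have h := hcons (k + 1 + d + 1) (by omega) (by omega)
      simp only [Nat.add_sub_cancel] at h
      have : k + 1 + (d + 1) = k + 1 + d + 1 := by omega
      rw [this]
      exact stepB (ξ k) (ξ (k + 1 + d)) (ξ (k + 1 + d + 1))
        (hnn k (by omega)).1 (hnn k (by omega)).2
        (hnn (k + 1 + d) (by omega)).1 (hnn (k + 1 + d) (by omega)).2
        (hnn (k + 1 + d + 1) (by omega)).1 (hnn (k + 1 + d + 1) (by omega)).2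
        (ih (by omega)) h
  have ha : ∀ i, k ≤ i → i < l → 1 ≤ det2 (ξ i) (ξ l) := fun i _ h2 =>
    hA (l - i - 1) i (by omega)
  have hb : ∀ i, k < i → i ≤ l → 1 ≤ det2 (ξ k) (ξ i) := by
    intro i h1 h2
    have := hB (i - k - 1) (by omega)
    rwa [show k + 1 + (i - k - 1) = i from by omega] at this
  -- the Plücker relation along the fan
  have hrel : ∀ i, 1 ≤ i → i ≤ n →
      det2 (ξ (i - 1)) (ξ l) * det2 (ξ k) (ξ i)
        - det2 (ξ k) (ξ (i - 1)) * det2 (ξ i) (ξ l) = 1 := by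
    intro i h1 h2
    rw [det2_pluck (ξ (i - 1)) (ξ i) (ξ k) (ξ l), hcons i h1 h2, hdet]
    ring
  -- minimal index with a_i ≤ b_i
  have hex : ∃ i, k < i ∧ i ≤ l ∧ det2 (ξ i) (ξ l) ≤ det2 (ξ k) (ξ i) := by
    refine ⟨l, by omega, le_refl l, ?_⟩
    rw [det2_self, hdet]; omega
  obtain ⟨m, hm1, hm2, hm3, hmin⟩ :
      ∃ m, k < m ∧ m ≤ l ∧ det2 (ξ m) (ξ l) ≤ det2 (ξ k) (ξ m) ∧
        ∀ j, j < m → ¬(k < j ∧ j ≤ l ∧ det2 (ξ j) (ξ l) ≤ det2 (ξ k) (ξ j)) := by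
    obtain ⟨a, b, c⟩ := Nat.find_spec hex
    exact ⟨Nat.find hex, a, b, c, fun j hj => Nat.find_min hex hj⟩
  -- m ≠ l
  have hml : m < l := by
    rcases lt_or_eq_of_le hm2 with h | h
    · exact h
    · exfalso
      have hr := hrel l (by omega) hln
      rw [det2_self, hdet] at hr
      -- hr : det2 (ξ (l-1)) (ξ l) * 1 - det2 (ξ k) (ξ (l-1)) * 0 = 1
      have hal : det2 (ξ (l - 1)) (ξ l) = 1 := by linarith
      have hmm := hmin (l - 1) (by omega)
      push_neg at hmm
      have := hmm (by omega) (by omega)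
      have hbl := hb (l - 1) (by omega) (by omega)
      omega
  -- now m is interior
  have hbm : 1 ≤ det2 (ξ k) (ξ m) := hb m hm1 hm2
  have ham : 1 ≤ det2 (ξ m) (ξ l) := ha m (by omega) hml
  have hr := hrel m (by omega) (by omega)
  -- previous index facts
  have hprev : det2 (ξ k) (ξ (m - 1)) + 1 ≤ det2 (ξ (m - 1)) (ξ l) ∧
      0 ≤ det2 (ξ k) (ξ (m - 1)) := by
    rcases Nat.eq_or_lt_of_le (by omega : k ≤ m - 1) with h | h
    · rw [← h, det2_self, hdet]
      exact ⟨by omega, le_refl 0⟩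
    · have hmm := hmin (m - 1) (by omega)
      push_neg at hmm
      have h1 := hmm (by omega) (by omega)
      have h2 := hb (m - 1) (by omega) (by omega)
      constructor <;> omega
  obtain ⟨hp1, hp2⟩ := hprev
  -- conclude b_m = 1 and a_m = 1
  have hbm1 : det2 (ξ k) (ξ m) = 1 := by
    nlinarith [mul_nonneg hp2 (sub_nonneg.2 hm3),
      mul_le_mul_of_nonneg_right hp1 (by linarith : (0:ℤ) ≤ det2 (ξ k) (ξ m))]
  have ham1 : det2 (ξ m) (ξ l) = 1 := by omega
  exact ⟨m, hm1, hml, eq_add_of_det (ξ k) (ξ l) (ξ m) hdet hbm1 ham1⟩
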